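/- arXiv:1709.08565 — 2 statements merged into one kernel-verified Lean document; each statement's English description precedes it below -/
import Mathlib

section
/- Let m ≥ 1, s ∈ (0,1), p ∈ [1,∞), let M be ℝ^m, let N be a metric space, let I be a countable index set, and for each i ∈ I let u_i : M → N be measurable. Suppose there exist b ∈ N and a collection (A_i)_{i∈I} of open subsets of M with pairwise disjoint closures such that u_i(x) = b for every x ∈ M \ A_i. Define u : M → N by u(x) = u_i(x) if x ∈ A_i for some i, and u(x) = b otherwise. Then E_{s,p}(u, M) ≤ 2^p · Σ_{i∈I} E_{s,p}(u_i, M). -/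
open MeasureTheory ENNReal

/-- The Gagliardo energy of a map `u` into a metric space `N` on a set `A ⊆ ℝ^m`. -/
noncomputable def gagliardoEnergy {m : ℕ} {N : Type} [PseudoMetricSpace N] (s p : ℝ)
    (u : EuclideanSpace ℝ (Fin m) → N) (A : Set (EuclideanSpace ℝ (Fin m))) : ℝ≥0∞ :=
  ∫⁻ x in A, ∫⁻ y in A,
    ENNReal.ofReal (dist (u x) (u y) ^ p / ‖x - y‖ ^ ((m : ℝ) + s * p))

/-- Auxiliary real inequality: `(d/D)^p`-type bound with constant `2^p`. -/
lemma gagliardo_aux_ineq {p : ℝ} (hp : 1 ≤ p) {d a c D : ℝ} (hd : 0 ≤ d) (ha : 0 ≤ a)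
    (hc : 0 ≤ c) (hdac : d ≤ a + c) (hD : 0 ≤ D) :
    ENNReal.ofReal (d ^ p / D) ≤
      ENNReal.ofReal (2 ^ p) * (ENNReal.ofReal (a ^ p / D) + ENNReal.ofReal (c ^ p / D)) := by
  have hp0 : (0:ℝ) ≤ p := le_trans zero_le_one hp
  have h1 : d ^ p ≤ 2 ^ p * (a ^ p + c ^ p) := by
    have hmax : a + c ≤ 2 * max a c := by
      rcases le_total a c with h | h
      · rw [max_eq_right h]; linarith
      · rw [max_eq_left h]; linarith
    have h2 : d ^ p ≤ (a + c) ^ p := Real.rpow_le_rpow hd hdac hp0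
    have h3 : (a + c) ^ p ≤ (2 * max a c) ^ p :=
      Real.rpow_le_rpow (by positivity) hmax hp0
    have h4 : (2 * max a c : ℝ) ^ p = 2 ^ p * max a c ^ p :=
      Real.mul_rpow (by norm_num) (le_max_of_le_left ha)
    have h5 : max a c ^ p ≤ a ^ p + c ^ p := by
      rcases le_total a c with h | h
      · rw [max_eq_right h]; exact le_add_of_nonneg_left (Real.rpow_nonneg ha _)
      · rw [max_eq_left h]; exact le_add_of_nonneg_right (Real.rpow_nonneg hc _)
    have h6 : (0:ℝ) ≤ 2 ^ p := by positivity
    calc d ^ p ≤ (a + c) ^ p := h2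
    _ ≤ (2 * max a c) ^ p := h3
    _ = 2 ^ p * max a c ^ p := h4
    _ ≤ 2 ^ p * (a ^ p + c ^ p) := mul_le_mul_of_nonneg_left h5 h6
  calc ENNReal.ofReal (d ^ p / D) ≤ ENNReal.ofReal (2 ^ p * (a ^ p + c ^ p) / D) := by
        apply ENNReal.ofReal_le_ofReal
        rw [div_eq_mul_inv, div_eq_mul_inv]
        exact mul_le_mul_of_nonneg_right h1 (inv_nonneg.mpr hD)
  _ = _ := by
        rw [mul_div_assoc, ENNReal.ofReal_mul (by positivity), add_div,
          ENNReal.ofReal_add (div_nonneg (Real.rpow_nonneg ha _) hD)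
            (div_nonneg (Real.rpow_nonneg hc _) hD)]

/-- Countable patching: gluing countably many maps which all equal a common constant `b`
outside open sets with pairwise disjoint closures. -/
theorem gagliardo_countable_patching {m : ℕ} (hm : 1 ≤ m) (s p : ℝ)
    (hs : s ∈ Set.Ioo (0 : ℝ) 1) (hp : 1 ≤ p)
    {N : Type} [MetricSpace N] [MeasurableSpace N] [BorelSpace N]
    {I : Type} [Countable I]
    (ui : I → EuclideanSpace ℝ (Fin m) → N) (hui : ∀ i, Measurable (ui i))
    (b : N) (A : I → Set (EuclideanSpace ℝ (Fin m)))
    (hAopen : ∀ i, IsOpen (A i))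
    (hAdisj : ∀ i j, i ≠ j → closure (A i) ∩ closure (A j) = ∅)
    (hbi : ∀ i, ∀ x ∉ A i, ui i x = b)
    (u : EuclideanSpace ℝ (Fin m) → N)
    (hu : ∀ i, ∀ x ∈ A i, u x = ui i x)
    (hub : ∀ x, x ∉ (⋃ i, A i) → u x = b) :
    gagliardoEnergy s p u Set.univ
      ≤ ENNReal.ofReal (2 ^ p) * ∑' i, gagliardoEnergy s p (ui i) Set.univ := by
  classical
  simp only [gagliardoEnergy, Measure.restrict_univ]
  set α : ℝ := (m : ℝ) + s * p with hα
  have hp0 : (0:ℝ) ≤ p := le_trans zero_le_one hp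
  have hpne : p ≠ 0 := by positivity
  have hα0 : (0:ℝ) ≤ α := by
    have : (1:ℝ) ≤ (m:ℝ) := by exact_mod_cast hm
    nlinarith [hs.1, hp0]
  -- basic set facts
  have hAmeas : ∀ i, MeasurableSet (A i) := fun i => (hAopen i).measurableSet
  have hAdisj' : Pairwise (Function.onFun Disjoint A) := by
    intro i j hij
    refine Set.disjoint_left.mpr fun x hxi hxj => ?_
    have h := hAdisj i j hij
    have : x ∈ closure (A i) ∩ closure (A j) :=
      Set.mem_inter (subset_closure hxi) (subset_closure hxj)
    rw [h] at this
    exact this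
  set S : Set (EuclideanSpace ℝ (Fin m)) := ⋃ i, A i with hS
  have hSmeas : MeasurableSet S := MeasurableSet.iUnion hAmeas
  -- u is measurable
  have hum : Measurable u := by
    intro T hT
    have hpre : u ⁻¹' T =
        (⋃ i, A i ∩ ui i ⁻¹' T) ∪ (Sᶜ ∩ (if b ∈ T then Set.univ else ∅)) := by
      ext x
      simp only [Set.mem_preimage, Set.mem_union, Set.mem_iUnion, Set.mem_inter_iff,
        Set.mem_compl_iff]
      constructor
      · intro hx
        by_cases hxS : x ∈ S
        · obtain ⟨i, hi⟩ := Set.mem_iUnion.mp hxS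
          exact Or.inl ⟨i, hi, by rwa [← hu i x hi]⟩
        · refine Or.inr ⟨hxS, ?_⟩
          rw [hub x hxS] at hx
          simp [hx]
      · rintro (⟨i, hi, hxT⟩ | ⟨hxS, hxT⟩)
        · rwa [hu i x hi]
        · rw [hub x hxS]
          by_cases hbT : b ∈ T
          · exact hbT
          · simp [hbT] at hxT
    rw [hpre]
    refine MeasurableSet.union (MeasurableSet.iUnion fun i => (hAmeas i).inter (hui i hT)) ?_
    exact hSmeas.compl.inter (by split <;> simp)
  set φ : EuclideanSpace ℝ (Fin m) → ℝ := fun y => dist b (u y) with hφdef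
  have hφ : Measurable φ :=
    ((continuous_const.dist continuous_id).measurable).comp hum
  have hφ0 : ∀ y, 0 ≤ φ y := fun y => dist_nonneg
  set q : EuclideanSpace ℝ (Fin m) → EuclideanSpace ℝ (Fin m) → ℝ≥0∞ :=
    fun x y => ENNReal.ofReal (φ y ^ p / ‖x - y‖ ^ α) with hqdef
  have hrpow : Continuous fun t : ℝ => t ^ p := Real.continuous_rpow_const hp0
  have hrpowα : Continuous fun t : ℝ => t ^ α := Real.continuous_rpow_const hα0
  have hQ : Measurable fun z : EuclideanSpace ℝ (Fin m) × EuclideanSpace ℝ (Fin m) =>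
      q z.1 z.2 := by
    apply Measurable.ennreal_ofReal
    apply Measurable.div
    · exact hrpow.measurable.comp (hφ.comp measurable_snd)
    · exact hrpowα.measurable.comp (measurable_fst.sub measurable_snd).norm
  have hgy : ∀ i x, Measurable fun y =>
      ENNReal.ofReal (dist (ui i x) (ui i y) ^ p / ‖x - y‖ ^ α) := by
    intro i x
    apply Measurable.ennreal_ofReal
    apply Measurable.div
    · exact hrpow.measurable.comp
        (((continuous_const.dist continuous_id).measurable).comp (hui i))
    · exact hrpowα.measurable.comp (measurable_const.sub measurable_id).norm
  have hqx : ∀ x, Measurable fun y => q x y := by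
    intro x
    apply Measurable.ennreal_ofReal
    apply Measurable.div
    · exact hrpow.measurable.comp hφ
    · exact hrpowα.measurable.comp (measurable_const.sub measurable_id).norm
  have h2p1 : (1:ℝ≥0∞) ≤ ENNReal.ofReal (2 ^ p) := by
    rw [← ENNReal.ofReal_one]
    apply ENNReal.ofReal_le_ofReal
    calc (1:ℝ) = (2:ℝ) ^ (0:ℝ) := (Real.rpow_zero 2).symm
    _ ≤ 2 ^ p := Real.rpow_le_rpow_of_exponent_le one_le_two hp0
  -- decomposition of integrals over S
  have hdecompS : ∀ f : EuclideanSpace ℝ (Fin m) → ℝ≥0∞,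
      (∫⁻ x in S, f x) = ∑' i, ∫⁻ x in A i, f x := by
    intro f
    rw [hS, Measure.restrict_iUnion hAdisj' hAmeas, lintegral_sum_measure]
  -- inner bound for x ∈ A i
  have hinner : ∀ i, ∀ x ∈ A i,
      (∫⁻ y, ENNReal.ofReal (dist (u x) (u y) ^ p / ‖x - y‖ ^ α))
        ≤ ENNReal.ofReal (2 ^ p) *
          ((∫⁻ y, ENNReal.ofReal (dist (ui i x) (ui i y) ^ p / ‖x - y‖ ^ α)) +
            ∫⁻ y in (A i)ᶜ, q x y) := by
    intro i x hx
    have hpt : ∀ y, ENNReal.ofReal (dist (u x) (u y) ^ p / ‖x - y‖ ^ α)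
        ≤ ENNReal.ofReal (2 ^ p) *
          (ENNReal.ofReal (dist (ui i x) (ui i y) ^ p / ‖x - y‖ ^ α) +
            ((A i)ᶜ).indicator (q x) y) := by
      intro y
      by_cases hy : y ∈ A i
      · rw [Set.indicator_of_notMem (Set.notMem_compl_iff.mpr hy), add_zero,
          hu i x hx, hu i y hy]
        exact le_mul_of_one_le_left (zero_le) h2p1
      · have e1 : ui i y = b := hbi i y hy
        have htri : dist (u x) (u y) ≤ dist (ui i x) (ui i y) + φ y := by
          rw [hu i x hx]
          calc dist (ui i x) (u y) ≤ dist (ui i x) b + dist b (u y) := dist_triangle _ _ _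
          _ = dist (ui i x) (ui i y) + φ y := by rw [e1, hφdef]
        rw [Set.indicator_of_mem (Set.mem_compl hy)]
        exact gagliardo_aux_ineq hp dist_nonneg dist_nonneg (hφ0 y) htri
          (Real.rpow_nonneg (norm_nonneg _) _)
    calc (∫⁻ y, ENNReal.ofReal (dist (u x) (u y) ^ p / ‖x - y‖ ^ α))
        ≤ ∫⁻ y, ENNReal.ofReal (2 ^ p) *
            (ENNReal.ofReal (dist (ui i x) (ui i y) ^ p / ‖x - y‖ ^ α) +
              ((A i)ᶜ).indicator (q x) y) := lintegral_mono hpt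
    _ = ENNReal.ofReal (2 ^ p) *
          ∫⁻ y, (ENNReal.ofReal (dist (ui i x) (ui i y) ^ p / ‖x - y‖ ^ α) +
            ((A i)ᶜ).indicator (q x) y) := lintegral_const_mul' _ _ ENNReal.ofReal_ne_top
    _ = _ := by
        rw [lintegral_add_left (hgy i x), lintegral_indicator (hAmeas i).compl]
  -- convert iterated set integrals of q to product-measure integrals
  have hconv : ∀ (s t : Set (EuclideanSpace ℝ (Fin m))), MeasurableSet s → MeasurableSet t →
      (∫⁻ x in s, ∫⁻ y in t, q x y) =
        ∫⁻ z in s ×ˢ t, q z.1 z.2 ∂((volume : Measure (EuclideanSpace ℝ (Fin m))).prod volume) := by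
    intro s t hsm htm
    rw [← Measure.prod_restrict (μ := (volume : Measure (EuclideanSpace ℝ (Fin m))))
      (ν := (volume : Measure (EuclideanSpace ℝ (Fin m)))) s t]
    exact (lintegral_prod _ hQ.aemeasurable).symm
  -- the combinatorial inequality for q
  have hstar : (∑' i, ∫⁻ x in A i, ∫⁻ y in (A i)ᶜ, q x y) + ∫⁻ x in Sᶜ, ∫⁻ y, q x y
      ≤ ∑' i, ∫⁻ x in (A i)ᶜ, ∫⁻ y in A i, q x y := by
    have huniv : (∫⁻ x in Sᶜ, ∫⁻ y, q x y)
        = ∫⁻ x in Sᶜ, ∫⁻ y in Set.univ, q x y := by simp [Measure.restrict_univ]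
    rw [huniv, hconv _ _ hSmeas.compl MeasurableSet.univ,
      tsum_congr (fun i => hconv _ _ (hAmeas i) (hAmeas i).compl),
      tsum_congr (fun i => hconv _ _ (hAmeas i).compl (hAmeas i))]
    set π := ((volume : Measure (EuclideanSpace ℝ (Fin m))).prod (volume : Measure (EuclideanSpace ℝ (Fin m)))) with hπ
    set Q : EuclideanSpace ℝ (Fin m) × EuclideanSpace ℝ (Fin m) → ℝ≥0∞ :=
      fun z => q z.1 z.2 with hQdef
    have hmAi : ∀ i, MeasurableSet (A i ×ˢ (A i)ᶜ) :=
      fun i => (hAmeas i).prod (hAmeas i).compl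
    have hmAi' : ∀ i, MeasurableSet ((A i)ᶜ ×ˢ A i) :=
      fun i => (hAmeas i).compl.prod (hAmeas i)
    have hmC : MeasurableSet ((Sᶜ : Set _) ×ˢ (Set.univ : Set (EuclideanSpace ℝ (Fin m)))) :=
      hSmeas.compl.prod MeasurableSet.univ
    have L1 : (∑' i, ∫⁻ z in A i ×ˢ (A i)ᶜ, Q z ∂π)
        = ∫⁻ z, ∑' i, (A i ×ˢ (A i)ᶜ).indicator Q z ∂π := by
      rw [lintegral_tsum fun i => (hQ.indicator (hmAi i)).aemeasurable]
      exact tsum_congr fun i => (lintegral_indicator (hmAi i) _).symm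
    have R1 : (∑' i, ∫⁻ z in (A i)ᶜ ×ˢ A i, Q z ∂π)
        = ∫⁻ z, ∑' i, ((A i)ᶜ ×ˢ A i).indicator Q z ∂π := by
      rw [lintegral_tsum fun i => (hQ.indicator (hmAi' i)).aemeasurable]
      exact tsum_congr fun i => (lintegral_indicator (hmAi' i) _).symm
    have L2 : (∫⁻ z in (Sᶜ : Set _) ×ˢ Set.univ, Q z ∂π)
        = ∫⁻ z, ((Sᶜ : Set _) ×ˢ (Set.univ : Set (EuclideanSpace ℝ (Fin m)))).indicator Q z ∂π :=
      (lintegral_indicator hmC _).symm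
    rw [L1, L2, R1, ← lintegral_add_left (f := fun z => ∑' i, (A i ×ˢ (A i)ᶜ).indicator Q z)
      (Measurable.ennreal_tsum fun i => hQ.indicator (hmAi i))]
    apply lintegral_mono
    rintro ⟨x, y⟩
    simp only [Pi.add_apply]
    by_cases hQ0 : Q (x, y) = 0
    · have hind : ∀ s : Set (EuclideanSpace ℝ (Fin m) × EuclideanSpace ℝ (Fin m)),
          s.indicator Q (x, y) = 0 := by
        intro s
        by_cases h : (x, y) ∈ s
        · rw [Set.indicator_of_mem h]; exact hQ0
        · exact Set.indicator_of_notMem h _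
      simp only [hind, tsum_zero, add_zero]
      exact zero_le
    · have hyS : ∃ j, y ∈ A j := by
        by_contra hc
        push_neg at hc
        have hyn : y ∉ S := by
          rw [hS]; simpa using hc
        have hφy : φ y = 0 := by rw [hφdef]; simp [hub y hyn]
        exact hQ0 (by simp [hQdef, hqdef, hφy, Real.zero_rpow hpne])
      obtain ⟨j, hyj⟩ := hyS
      by_cases hxS : ∃ k, x ∈ A k
      · obtain ⟨k, hxk⟩ := hxS
        have hC0 : ((Sᶜ : Set _) ×ˢ (Set.univ : Set _)).indicator Q (x, y) = 0 :=
          Set.indicator_of_notMem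
            (fun hmem => hmem.1 (Set.mem_iUnion.mpr ⟨k, hxk⟩)) _
        have htsum : (∑' i, (A i ×ˢ (A i)ᶜ).indicator Q (x, y))
            = (A k ×ˢ (A k)ᶜ).indicator Q (x, y) := by
          apply tsum_eq_single
          intro i hik
          exact Set.indicator_of_notMem
            (fun hmem => Set.disjoint_left.mp (hAdisj' hik) hmem.1 hxk) _
        rw [hC0, htsum, add_zero]
        by_cases hyk : y ∈ A k
        · rw [Set.indicator_of_notMem (fun hmem => hmem.2 hyk)]
          exact zero_le
        · have hjk : j ≠ k := fun h => hyk (h ▸ hyj)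
          have hxj : x ∉ A j := fun h => Set.disjoint_left.mp (hAdisj' hjk) h hxk
          calc (A k ×ˢ (A k)ᶜ).indicator Q (x, y)
              = ((A j)ᶜ ×ˢ A j).indicator Q (x, y) := by
                rw [Set.indicator_of_mem (Set.mem_prod.mpr ⟨hxk, Set.mem_compl hyk⟩),
                  Set.indicator_of_mem (Set.mem_prod.mpr ⟨Set.mem_compl hxj, hyj⟩)]
          _ ≤ _ := ENNReal.le_tsum j
      · have hxSc : x ∈ Sᶜ := by
          rw [hS]; simpa using fun k h => hxS ⟨k, h⟩
        have htsum0 : ∀ i, (A i ×ˢ (A i)ᶜ).indicator Q (x, y) = 0 :=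
          fun i => Set.indicator_of_notMem (fun hmem => hxS ⟨i, hmem.1⟩) _
        have hxj : x ∉ A j := fun h => hxS ⟨j, h⟩
        calc (∑' i, (A i ×ˢ (A i)ᶜ).indicator Q (x, y))
              + ((Sᶜ : Set _) ×ˢ (Set.univ : Set _)).indicator Q (x, y)
            = ((Sᶜ : Set _) ×ˢ (Set.univ : Set _)).indicator Q (x, y) := by
              simp [htsum0]
        _ = Q (x, y) := Set.indicator_of_mem (Set.mem_prod.mpr ⟨hxSc, Set.mem_univ y⟩) _
        _ = ((A j)ᶜ ×ˢ A j).indicator Q (x, y) :=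
              (Set.indicator_of_mem (Set.mem_prod.mpr ⟨Set.mem_compl hxj, hyj⟩) _).symm
        _ ≤ _ := ENNReal.le_tsum j
  -- measurability of x ↦ ∫⁻ y in (A i)ᶜ, q x y
  have hqint : ∀ i, Measurable fun x => ∫⁻ y in (A i)ᶜ, q x y := by
    intro i
    exact Measurable.lintegral_prod_right' (f := fun z => q z.1 z.2) hQ
  -- main chain
  calc ∫⁻ x, ∫⁻ y, ENNReal.ofReal (dist (u x) (u y) ^ p / ‖x - y‖ ^ α)
      = (∫⁻ x in S, ∫⁻ y, ENNReal.ofReal (dist (u x) (u y) ^ p / ‖x - y‖ ^ α))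
        + ∫⁻ x in Sᶜ, ∫⁻ y, ENNReal.ofReal (dist (u x) (u y) ^ p / ‖x - y‖ ^ α) :=
        (lintegral_add_compl _ hSmeas).symm
  _ = (∑' i, ∫⁻ x in A i, ∫⁻ y, ENNReal.ofReal (dist (u x) (u y) ^ p / ‖x - y‖ ^ α))
        + ∫⁻ x in Sᶜ, ∫⁻ y, q x y := by
        rw [hdecompS]
        congr 1
        refine setLIntegral_congr_fun hSmeas.compl (fun x hx => ?_)
        refine lintegral_congr fun y => ?_
        rw [hub x hx]
  _ ≤ (∑' i, ENNReal.ofReal (2 ^ p) *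
          ((∫⁻ x in A i, ∫⁻ y, ENNReal.ofReal (dist (ui i x) (ui i y) ^ p / ‖x - y‖ ^ α))
            + ∫⁻ x in A i, ∫⁻ y in (A i)ᶜ, q x y))
        + ∫⁻ x in Sᶜ, ∫⁻ y, q x y := by
        refine add_le_add_left (ENNReal.tsum_le_tsum fun i => ?_) _
        calc (∫⁻ x in A i, ∫⁻ y, ENNReal.ofReal (dist (u x) (u y) ^ p / ‖x - y‖ ^ α))
            ≤ ∫⁻ x in A i, ENNReal.ofReal (2 ^ p) *
                ((∫⁻ y, ENNReal.ofReal (dist (ui i x) (ui i y) ^ p / ‖x - y‖ ^ α)) +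
                  ∫⁻ y in (A i)ᶜ, q x y) := setLIntegral_mono' (hAmeas i) (hinner i)
        _ = ENNReal.ofReal (2 ^ p) * ∫⁻ x in A i,
              ((∫⁻ y, ENNReal.ofReal (dist (ui i x) (ui i y) ^ p / ‖x - y‖ ^ α)) +
                ∫⁻ y in (A i)ᶜ, q x y) := lintegral_const_mul' _ _ ENNReal.ofReal_ne_top
        _ = _ := by rw [lintegral_add_right _ (hqint i)]
  _ ≤ ENNReal.ofReal (2 ^ p) *
        ((∑' i, ((∫⁻ x in A i, ∫⁻ y, ENNReal.ofReal (dist (ui i x) (ui i y) ^ p / ‖x - y‖ ^ α))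
            + ∫⁻ x in A i, ∫⁻ y in (A i)ᶜ, q x y))
          + ∫⁻ x in Sᶜ, ∫⁻ y, q x y) := by
        rw [ENNReal.tsum_mul_left, mul_add]
        exact add_le_add_right (le_mul_of_one_le_left (zero_le) h2p1) _
  _ = ENNReal.ofReal (2 ^ p) *
        ((∑' i, ∫⁻ x in A i, ∫⁻ y, ENNReal.ofReal (dist (ui i x) (ui i y) ^ p / ‖x - y‖ ^ α))
          + ((∑' i, ∫⁻ x in A i, ∫⁻ y in (A i)ᶜ, q x y) + ∫⁻ x in Sᶜ, ∫⁻ y, q x y)) := by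
        rw [ENNReal.tsum_add, add_assoc]
  _ ≤ ENNReal.ofReal (2 ^ p) *
        ((∑' i, ∫⁻ x in A i, ∫⁻ y, ENNReal.ofReal (dist (ui i x) (ui i y) ^ p / ‖x - y‖ ^ α))
          + ∑' i, ∫⁻ x in (A i)ᶜ, ∫⁻ y, ENNReal.ofReal (dist (ui i x) (ui i y) ^ p / ‖x - y‖ ^ α)) := by
        refine mul_le_mul_right (add_le_add_right ?_ _) _
        refine le_trans hstar (ENNReal.tsum_le_tsum fun i => ?_)
        calc (∫⁻ x in (A i)ᶜ, ∫⁻ y in A i, q x y)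
            = ∫⁻ x in (A i)ᶜ, ∫⁻ y in A i,
                ENNReal.ofReal (dist (ui i x) (ui i y) ^ p / ‖x - y‖ ^ α) := by
              refine setLIntegral_congr_fun (hAmeas i).compl
                (fun x hx => ?_)
              refine setLIntegral_congr_fun (hAmeas i)
                (fun y hy => ?_)
              simp only [hqdef, hφdef]
              rw [hu i y hy, hbi i x hx]
        _ ≤ _ := setLIntegral_mono' (hAmeas i).compl fun x _ =>
              setLIntegral_le_lintegral _ _
  _ = ENNReal.ofReal (2 ^ p) *
        ∑' i, ∫⁻ x, ∫⁻ y, ENNReal.ofReal (dist (ui i x) (ui i y) ^ p / ‖x - y‖ ^ α) := by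
        rw [← ENNReal.tsum_add]
        congr 1
        exact tsum_congr fun i => lintegral_add_compl _ (hAmeas i)
end

section
/- Let m, N ≥ 1, p ∈ [1,∞), let G assign to each open A ⊆ ℝ^m and measurable u : A → ℝ^N a value G(u,A) ∈ [0,∞], monotone under restriction (A ⊆ B implies G(u|_A, A) ≤ G(u,B)), superadditive on open sets with disjoint closures (G(u, A∪B) ≥ G(u,A) + G(u,B)), and satisfying the scaling law G(u, h + λA) = λ^m · G(u(h+λ·), A) for all λ > 0, h ∈ ℝ^m. If G(u, B^m) < ∞ for every u ∈ L^p(B^m, ℝ^N), then there exists C ≥ 0 such that G(u, B^m) ≤ C(1 + ∫_{B^m} |u|^p) for every u ∈ L^p(B^m, ℝ^N). -/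
open MeasureTheory ENNReal Metric Set

section Aux
variable {m : ℕ}
local notation "E" => EuclideanSpace ℝ (Fin m)

lemma img_ball (a : E) {r : ℝ} (hr : 0 < r) :
    (fun y : E => a + r • y) '' ball 0 1 = ball a r := by
  ext x
  simp only [mem_image, mem_ball, dist_eq_norm]
  constructor
  · rintro ⟨y, hy, rfl⟩
    simp only [add_sub_cancel_left, norm_smul, Real.norm_eq_abs, abs_of_pos hr]
    calc r * ‖y‖ < r * 1 := by
          apply mul_lt_mul_of_pos_left _ hr
          simpa using hy
      _ = r := mul_one r
  · intro hx
    refine ⟨r⁻¹ • (x - a), ?_, by simp [smul_smul, mul_inv_cancel₀ hr.ne']⟩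
    simp only [sub_zero, norm_smul, Real.norm_eq_abs, abs_of_pos (inv_pos.2 hr)]
    rw [inv_mul_lt_iff₀ hr, mul_one]
    exact hx

lemma map_vol (a : E) {r : ℝ} (hr : 0 < r) :
    Measure.map (fun y : E => a + r • y) volume
      = ENNReal.ofReal ((r ^ m)⁻¹) • volume := by
  have h1 : (fun y : E => a + r • y) = (fun y : E => a + y) ∘ (fun y : E => r • y) := rfl
  rw [h1, ← Measure.map_map (measurable_const_add a) (measurable_const_smul r)]
  rw [show (fun y : E => r • y) = (r • ·) from rfl,
    Measure.map_addHaar_smul volume hr.ne']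
  rw [Measure.map_smul, (measurePreserving_add_left volume a).map_eq]
  congr 1
  rw [finrank_euclideanSpace_fin, abs_of_pos (by positivity)]

lemma lint_ball (g : E → ℝ≥0∞) (hg : Measurable g) (a : E) {r : ℝ} (hr : 0 < r) :
    ∫⁻ x in ball a r, g x
      = ENNReal.ofReal (r ^ m) * ∫⁻ y in ball (0 : E) 1, g (a + r • y) := by
  have hT : Measurable (fun y : E => a + r • y) :=
    (measurable_const_smul r).const_add a
  have h1 : ∫⁻ x in ball a r, g x ∂(Measure.map (fun y : E => a + r • y) volume)
      = ∫⁻ y in (fun y : E => a + r • y) ⁻¹' ball a r, g (a + r • y) := by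
    exact setLIntegral_map measurableSet_ball hg hT
  have h2 : (fun y : E => a + r • y) ⁻¹' ball a r = ball (0 : E) 1 := by
    rw [← img_ball a hr]
    apply Set.preimage_image_eq
    intro x y hxy
    exact smul_right_injective _ hr.ne' (add_left_cancel hxy)
  rw [map_vol a hr] at h1
  rw [h2] at h1
  rw [Measure.restrict_smul] at h1
  rw [lintegral_smul_measure, smul_eq_mul] at h1
  rw [← h1, ← mul_assoc, ← ENNReal.ofReal_mul (by positivity),
    mul_inv_cancel₀ (by positivity), ENNReal.ofReal_one, one_mul]

lemma choose_r (hm : 1 ≤ m) (n : ℕ) (Ir : ℝ) (hIr : 0 ≤ Ir) :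
    ∃ r : ℝ, 0 < r ∧ r ≤ (2:ℝ)^(-(n:ℤ)-3) ∧
      1 ≤ r ^ m * ((2:ℝ)^((n+3)*m+n) * (1+Ir)) ∧
      r ^ m * Ir ≤ (2:ℝ)^(-(n:ℤ)) := by
  have h1I : (0:ℝ) < 1 + Ir := by linarith
  have hmz : (m:ℝ) ≠ 0 := by exact_mod_cast (by omega : m ≠ 0)
  set b : ℝ := ((2:ℝ)^(-(n:ℤ)) / (1+Ir)) ^ (1/(m:ℝ)) with hb
  have hbpos : 0 < b := Real.rpow_pos_of_pos (by positivity) _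
  have hbm : b ^ m = (2:ℝ)^(-(n:ℤ)) / (1+Ir) := by
    rw [hb, ← Real.rpow_natCast _ m, ← Real.rpow_mul (by positivity),
      one_div, inv_mul_cancel₀ hmz, Real.rpow_one]
  have key : ((2:ℝ)^(-(n:ℤ)-3))^m * (2:ℝ)^((n+3)*m+n) = (2:ℝ)^(n:ℤ) := by
    rw [← zpow_natCast (2:ℝ) ((n+3)*m+n), ← zpow_natCast ((2:ℝ)^(-(n:ℤ)-3)) m,
      ← zpow_mul, ← zpow_add₀ (two_ne_zero)]
    congr 1
    push_cast
    ring
  refine ⟨min ((2:ℝ)^(-(n:ℤ)-3)) b, lt_min (by positivity) hbpos, min_le_left _ _, ?_, ?_⟩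
  · rcases min_cases ((2:ℝ)^(-(n:ℤ)-3)) b with ⟨heq, _⟩ | ⟨heq, _⟩ <;> rw [heq]
    · have h2 : (1:ℝ) ≤ (2:ℝ)^(n:ℤ) := one_le_zpow₀ one_le_two (by positivity)
      calc (1:ℝ) ≤ (2:ℝ)^(n:ℤ) * (1+Ir) := by nlinarith
        _ = ((2:ℝ)^(-(n:ℤ)-3))^m * ((2:ℝ)^((n+3)*m+n) * (1+Ir)) := by
            rw [← mul_assoc, key]
    · rw [hbm]
      have h3 : (1:ℝ) ≤ (2:ℝ)^((n+3)*m) := one_le_pow₀ one_le_two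
      have h4 : (2:ℝ)^(-(n:ℤ)) * (2:ℝ)^((n+3)*m+n) = (2:ℝ)^((n+3)*m) := by
        rw [← zpow_natCast (2:ℝ) ((n+3)*m+n), ← zpow_add₀ (two_ne_zero),
          ← zpow_natCast (2:ℝ) ((n+3)*m)]
        congr 1
        push_cast
        ring
      calc (1:ℝ) ≤ (2:ℝ)^((n+3)*m) := h3
        _ = (2:ℝ)^(-(n:ℤ)) / (1+Ir) * ((2:ℝ)^((n+3)*m+n) * (1+Ir)) := by
            have h5 : (2:ℝ)^(-(n:ℤ)) / (1+Ir) * ((2:ℝ)^((n+3)*m+n) * (1+Ir))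
                = (2:ℝ)^(-(n:ℤ)) * (2:ℝ)^((n+3)*m+n) := by
              field_simp
            rw [h5, h4]
  · have hmin : min ((2:ℝ)^(-(n:ℤ)-3)) b ≤ b := min_le_right _ _
    have h0 : 0 ≤ min ((2:ℝ)^(-(n:ℤ)-3)) b := le_of_lt (lt_min (by positivity) hbpos)
    have hpw : (min ((2:ℝ)^(-(n:ℤ)-3)) b) ^ m ≤ b ^ m := pow_le_pow_left₀ h0 hmin m
    calc (min ((2:ℝ)^(-(n:ℤ)-3)) b) ^ m * Ir ≤ b ^ m * Ir :=
          mul_le_mul_of_nonneg_right hpw hIr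
      _ = (2:ℝ)^(-(n:ℤ)) * (Ir / (1+Ir)) := by rw [hbm]; ring
      _ ≤ (2:ℝ)^(-(n:ℤ)) * 1 := by
          apply mul_le_mul_of_nonneg_left _ (by positivity)
          rw [div_le_one h1I]; linarith
      _ = (2:ℝ)^(-(n:ℤ)) := mul_one _

noncomputable def cen (hm : 1 ≤ m) (n : ℕ) : EuclideanSpace ℝ (Fin m) :=
  (1 - (2:ℝ)^(-(n:ℤ))) • EuclideanSpace.single (⟨0, hm⟩ : Fin m) (1:ℝ)

lemma norm_cen (hm : 1 ≤ m) (n : ℕ) : ‖cen hm n‖ = 1 - (2:ℝ)^(-(n:ℤ)) := by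
  have h1 : (2:ℝ)^(-(n:ℤ)) ≤ 1 := zpow_le_one_of_nonpos₀ one_le_two (by omega)
  rw [cen, norm_smul, EuclideanSpace.norm_single, norm_one, mul_one,
    Real.norm_eq_abs, abs_of_nonneg (by linarith)]

lemma dist_cen (hm : 1 ≤ m) (i j : ℕ) :
    dist (cen hm i) (cen hm j) = |(2:ℝ)^(-(j:ℤ)) - (2:ℝ)^(-(i:ℤ))| := by
  rw [dist_eq_norm, cen, cen, ← sub_smul, norm_smul, EuclideanSpace.norm_single,
    norm_one, mul_one, Real.norm_eq_abs]
  congr 1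
  ring

lemma cen_ball (hm : 1 ≤ m) (n : ℕ) :
    closedBall (cen hm n) ((2:ℝ)^(-(n:ℤ)-3)) ⊆ ball 0 1 := by
  intro x hx
  rw [mem_closedBall, dist_eq_norm] at hx
  rw [mem_ball, dist_zero_right]
  have h1 : ‖x‖ ≤ ‖cen hm n‖ + (2:ℝ)^(-(n:ℤ)-3) := by
    calc ‖x‖ = ‖x - cen hm n + cen hm n‖ := by rw [sub_add_cancel]
      _ ≤ ‖x - cen hm n‖ + ‖cen hm n‖ := norm_add_le _ _
      _ ≤ _ := by rw [add_comm]; exact add_le_add le_rfl hx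
  rw [norm_cen] at h1
  have h2 : (2:ℝ)^(-(n:ℤ)-3) < (2:ℝ)^(-(n:ℤ)) := by
    apply zpow_lt_zpow_right₀ (one_lt_two (α := ℝ))
    omega
  linarith

lemma cen_disj (hm : 1 ≤ m) {i j : ℕ} (hij : i < j) :
    Disjoint (closedBall (cen hm i) ((2:ℝ)^(-(i:ℤ)-3)))
      (closedBall (cen hm j) ((2:ℝ)^(-(j:ℤ)-3))) := by
  apply closedBall_disjoint_closedBall
  rw [dist_cen]
  have hji : (2:ℝ)^(-(j:ℤ)) ≤ (2:ℝ)^(-(i:ℤ)-1) :=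
    zpow_le_zpow_right₀ one_le_two (by omega)
  have hj3 : (2:ℝ)^(-(j:ℤ)-3) ≤ (2:ℝ)^(-(i:ℤ)-4) :=
    zpow_le_zpow_right₀ one_le_two (by omega)
  have e1 : (2:ℝ)^(-(i:ℤ)-1) = (2:ℝ)^(-(i:ℤ)) / 2 := by
    rw [zpow_sub₀ (two_ne_zero), zpow_one]
  have e3 : (2:ℝ)^(-(i:ℤ)-3) = (2:ℝ)^(-(i:ℤ)) / 8 := by
    rw [zpow_sub₀ (two_ne_zero)]; norm_num
  have e4 : (2:ℝ)^(-(i:ℤ)-4) = (2:ℝ)^(-(i:ℤ)) / 16 := by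
    rw [zpow_sub₀ (two_ne_zero)]; norm_num
  have habs : |(2:ℝ)^(-(j:ℤ)) - (2:ℝ)^(-(i:ℤ))| = (2:ℝ)^(-(i:ℤ)) - (2:ℝ)^(-(j:ℤ)) := by
    rw [abs_of_nonpos (by linarith [zpow_le_zpow_right₀ (one_le_two (α := ℝ)) (by omega : -(j:ℤ) ≤ -(i:ℤ))])]
    ring
  rw [habs]
  have hpj : (0:ℝ) < 2^(-(j:ℤ)) := zpow_pos two_pos _
  have hpi : (0:ℝ) < 2^(-(i:ℤ)) := zpow_pos two_pos _
  linarith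

lemma cen_disj' (hm : 1 ≤ m) {i j : ℕ} (hij : i ≠ j) :
    Disjoint (closedBall (cen hm i) ((2:ℝ)^(-(i:ℤ)-3)))
      (closedBall (cen hm j) ((2:ℝ)^(-(j:ℤ)-3))) := by
  rcases hij.lt_or_gt with h | h
  · exact cen_disj hm h
  · exact (cen_disj hm h).symm

end Aux

section LpAux
variable {α : Type*} [MeasurableSpace α] {μ : Measure α}
  {F : Type*} [NormedAddCommGroup F]

lemma lp_int {p : ℝ} (hp : 1 ≤ p) {u : α → F} (hu : MemLp u (ENNReal.ofReal p) μ) :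
    ∫⁻ x, (‖u x‖₊ : ℝ≥0∞) ^ p ∂μ < ⊤ := by
  have hp0 : (0:ℝ) < p := lt_of_lt_of_le one_pos hp
  have h1 := hu.2
  rw [eLpNorm_eq_lintegral_rpow_enorm_toReal (by simp [hp0, ENNReal.ofReal_eq_zero, not_le])
    ENNReal.ofReal_ne_top] at h1
  rw [ENNReal.toReal_ofReal hp0.le] at h1
  have h2 : (∫⁻ x, (‖u x‖₊ : ℝ≥0∞) ^ p ∂μ) ^ (1/p) ≠ ⊤ := h1.ne
  by_contra h3
  push_neg at h3
  rw [top_le_iff] at h3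
  rw [h3, ENNReal.top_rpow_of_pos (by positivity)] at h2
  exact h2 rfl

lemma lp_mem {p : ℝ} (hp : 1 ≤ p) {u : α → F} (hmeas : AEStronglyMeasurable u μ)
    (hint : ∫⁻ x, (‖u x‖₊ : ℝ≥0∞) ^ p ∂μ < ⊤) : MemLp u (ENNReal.ofReal p) μ := by
  have hp0 : (0:ℝ) < p := lt_of_lt_of_le one_pos hp
  refine ⟨hmeas, ?_⟩
  rw [eLpNorm_eq_lintegral_rpow_enorm_toReal (by simp [hp0, ENNReal.ofReal_eq_zero, not_le])
    ENNReal.ofReal_ne_top, ENNReal.toReal_ofReal hp0.le]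
  exact ENNReal.rpow_lt_top_of_nonneg (by positivity) hint.ne

end LpAux

/-- Nonlinear uniform boundedness principle in `L^p`: a local, superadditive energy with
`m`-homogeneous scaling which is finite on all of `L^p(B^m, ℝ^N)` satisfies a uniform
linear bound by the `L^p` energy. -/
theorem uniform_boundedness_Lp {m N : ℕ} (hm : 1 ≤ m) (hN : 1 ≤ N) (p : ℝ) (hp : 1 ≤ p)
    (G : (EuclideanSpace ℝ (Fin m) → EuclideanSpace ℝ (Fin N)) →
      Set (EuclideanSpace ℝ (Fin m)) → ℝ≥0∞)
    (hlocal : ∀ u v A, (∀ x ∈ A, u x = v x) → G u A = G v A)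
    (hmono : ∀ u (A B : Set (EuclideanSpace ℝ (Fin m))), IsOpen A → IsOpen B → A ⊆ B →
      G u A ≤ G u B)
    (hsuper : ∀ u (A B : Set (EuclideanSpace ℝ (Fin m))), IsOpen A → IsOpen B →
      closure A ∩ closure B = ∅ → G u A + G u B ≤ G u (A ∪ B))
    (hscale : ∀ u (lam : ℝ), 0 < lam → ∀ h : EuclideanSpace ℝ (Fin m),
      ∀ A : Set (EuclideanSpace ℝ (Fin m)), IsOpen A →
      G u ((fun x => h + lam • x) '' A)
        = ENNReal.ofReal (lam ^ (m : ℕ)) * G (fun x => u (h + lam • x)) A)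
    (hfin : ∀ u : EuclideanSpace ℝ (Fin m) → EuclideanSpace ℝ (Fin N),
      Measurable u →
      MemLp u (ENNReal.ofReal p)
        (volume.restrict (ball (0 : EuclideanSpace ℝ (Fin m)) 1)) →
      G u (ball 0 1) < ⊤) :
    ∃ C : ℝ, 0 ≤ C ∧
      ∀ u : EuclideanSpace ℝ (Fin m) → EuclideanSpace ℝ (Fin N),
        Measurable u →
        MemLp u (ENNReal.ofReal p)
          (volume.restrict (ball (0 : EuclideanSpace ℝ (Fin m)) 1)) →
        G u (ball 0 1)
          ≤ ENNReal.ofReal C *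
              (1 + ∫⁻ x in ball (0 : EuclideanSpace ℝ (Fin m)) 1,
                (‖u x‖₊ : ℝ≥0∞) ^ p) := by
  classical
  by_contra hC
  push_neg at hC
  have H : ∀ n : ℕ, ∃ u, Measurable u ∧
      MemLp u (ENNReal.ofReal p)
        (volume.restrict (ball (0 : EuclideanSpace ℝ (Fin m)) 1)) ∧
      ENNReal.ofReal ((2:ℝ)^((n+3)*m+n)) *
          (1 + ∫⁻ x in ball (0 : EuclideanSpace ℝ (Fin m)) 1, (‖u x‖₊ : ℝ≥0∞) ^ p)
        < G u (ball 0 1) := fun n => hC _ (by positivity)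
  choose u humeas humem hubig using H
  set I : ℕ → ℝ≥0∞ :=
    fun n => ∫⁻ x in ball (0 : EuclideanSpace ℝ (Fin m)) 1, (‖u n x‖₊ : ℝ≥0∞) ^ p with hIdef
  have hIfin : ∀ n, I n < ⊤ := fun n => lp_int hp (humem n)
  choose r hr0 hrle hrbig hrsmall using
    fun n : ℕ => choose_r hm n (I n).toReal ENNReal.toReal_nonneg
  -- per-scale energy bound
  have hGn : ∀ n, 1 ≤ ENNReal.ofReal (r n ^ m) * G (u n) (ball 0 1) := by
    intro n
    have h1 : (1 : ℝ≥0∞) + I n = ENNReal.ofReal (1 + (I n).toReal) := by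
      rw [ENNReal.ofReal_add zero_le_one ENNReal.toReal_nonneg, ENNReal.ofReal_one,
        ENNReal.ofReal_toReal (hIfin n).ne]
    calc (1:ℝ≥0∞) = ENNReal.ofReal 1 := ENNReal.ofReal_one.symm
      _ ≤ ENNReal.ofReal (r n ^ m * ((2:ℝ)^((n+3)*m+n) * (1+(I n).toReal))) :=
          ENNReal.ofReal_le_ofReal (hrbig n)
      _ = ENNReal.ofReal (r n ^ m) *
            (ENNReal.ofReal ((2:ℝ)^((n+3)*m+n)) * ENNReal.ofReal (1+(I n).toReal)) := by
          rw [ENNReal.ofReal_mul (pow_nonneg (hr0 n).le m), ENNReal.ofReal_mul (by positivity)]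
      _ = ENNReal.ofReal (r n ^ m) *
            (ENNReal.ofReal ((2:ℝ)^((n+3)*m+n)) * (1 + I n)) := by rw [h1]
      _ ≤ ENNReal.ofReal (r n ^ m) * G (u n) (ball 0 1) :=
          mul_le_mul_right (hubig n).le _
  set B : ℕ → Set (EuclideanSpace ℝ (Fin m)) := fun n => ball (cen hm n) (r n) with hBdef
  have hBsub : ∀ n, B n ⊆ closedBall (cen hm n) ((2:ℝ)^(-(n:ℤ)-3)) := fun n =>
    (ball_subset_closedBall).trans (closedBall_subset_closedBall (hrle n))
  have hBdisj : ∀ i j, i ≠ j → Disjoint (B i) (B j) := fun i j hij =>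
    Disjoint.mono (hBsub i) (hBsub j) (cen_disj' hm hij)
  have hBball : ∀ n, B n ⊆ ball 0 1 := fun n => (hBsub n).trans (cen_ball hm n)
  set w : ℕ → EuclideanSpace ℝ (Fin m) → EuclideanSpace ℝ (Fin N) :=
    fun n x => u n ((r n)⁻¹ • (x - cen hm n)) with hwdef
  set v : EuclideanSpace ℝ (Fin m) → EuclideanSpace ℝ (Fin N) :=
    fun x => if hx : ∃ k, x ∈ B k then w hx.choose x else 0 with hvdef
  have hvB : ∀ n, ∀ y ∈ B n, v y = w n y := by
    intro n y hy
    have hx : ∃ k, y ∈ B k := ⟨n, hy⟩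
    rw [hvdef]
    simp only
    rw [dif_pos hx]
    have hcn : hx.choose = n := by
      by_contra hne
      exact Set.disjoint_left.mp (hBdisj _ _ hne) hx.choose_spec hy
    rw [hcn]
  have hv0 : ∀ y, (¬ ∃ k, y ∈ B k) → v y = 0 := by
    intro y hy
    rw [hvdef]
    simp only
    rw [dif_neg hy]
  have hwcomp : ∀ n y, w n (cen hm n + r n • y) = u n y := by
    intro n y
    rw [hwdef]
    simp only
    rw [add_sub_cancel_left, smul_smul, inv_mul_cancel₀ (hr0 n).ne', one_smul]
  have hwmeas : ∀ n, Measurable (w n) := by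
    intro n
    exact (humeas n).comp ((measurable_id.sub measurable_const).const_smul ((r n)⁻¹))
  -- measurability of v
  have hvmeas : Measurable v := by
    intro t ht
    have hkey : ∀ S₀ : Set (EuclideanSpace ℝ (Fin m)),
        (S₀ = if (0 : EuclideanSpace ℝ (Fin N)) ∈ t then (⋃ k, B k)ᶜ else ∅) →
        v ⁻¹' t = (⋃ k, B k ∩ w k ⁻¹' t) ∪ S₀ := by
      intro S₀ hS₀
      ext x
      constructor
      · intro hxt
        by_cases hx : ∃ k, x ∈ B k
        · obtain ⟨k, hk⟩ := hx
          left
          exact Set.mem_iUnion.2 ⟨k, hk, by rwa [Set.mem_preimage, ← hvB k x hk]⟩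
        · right
          have h0t : (0 : EuclideanSpace ℝ (Fin N)) ∈ t := by
            rw [Set.mem_preimage, hv0 x hx] at hxt
            exact hxt
          rw [hS₀, if_pos h0t]
          simpa using hx
      · intro hx
        rcases hx with hx | hx
        · obtain ⟨k, hk, hkt⟩ := Set.mem_iUnion.1 hx
          rw [Set.mem_preimage, hvB k x hk]
          exact hkt
        · rw [hS₀] at hx
          by_cases h0t : (0 : EuclideanSpace ℝ (Fin N)) ∈ t
          · rw [if_pos h0t] at hx
            have : ¬ ∃ k, x ∈ B k := by simpa using hx
            rw [Set.mem_preimage, hv0 x this]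
            exact h0t
          · rw [if_neg h0t] at hx
            exact absurd hx (Set.notMem_empty x)
    rw [hkey _ rfl]
    apply MeasurableSet.union
    · exact MeasurableSet.iUnion fun k => measurableSet_ball.inter (hwmeas k ht)
    · split
      · exact (MeasurableSet.iUnion fun k => measurableSet_ball).compl
      · exact MeasurableSet.empty
  -- integrability of v
  have hterm : ∀ n, ∫⁻ x in B n, (‖v x‖₊ : ℝ≥0∞) ^ p ≤ ENNReal.ofReal ((2:ℝ)^(-(n:ℤ))) := by
    intro n
    have hgmeas : Measurable (fun x => (‖w n x‖₊ : ℝ≥0∞) ^ p) :=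
      ((hwmeas n).nnnorm.coe_nnreal_ennreal).pow_const p
    have h1 : ∫⁻ x in B n, (‖v x‖₊ : ℝ≥0∞) ^ p = ∫⁻ x in B n, (‖w n x‖₊ : ℝ≥0∞) ^ p := by
      apply setLIntegral_congr_fun measurableSet_ball
      exact fun x hx => by rw [hvB n x hx]
    have h2 : ∫⁻ x in B n, (‖w n x‖₊ : ℝ≥0∞) ^ p
        = ENNReal.ofReal (r n ^ m) * ∫⁻ y in ball (0 : EuclideanSpace ℝ (Fin m)) 1,
            (‖w n (cen hm n + r n • y)‖₊ : ℝ≥0∞) ^ p :=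
      lint_ball _ hgmeas _ (hr0 n)
    have h3 : (∫⁻ y in ball (0 : EuclideanSpace ℝ (Fin m)) 1,
        (‖w n (cen hm n + r n • y)‖₊ : ℝ≥0∞) ^ p) = I n := by
      rw [hIdef]
      simp only
      apply lintegral_congr
      intro y
      rw [hwcomp]
    rw [h1, h2, h3]
    calc ENNReal.ofReal (r n ^ m) * I n
        = ENNReal.ofReal (r n ^ m) * ENNReal.ofReal (I n).toReal := by
          rw [ENNReal.ofReal_toReal (hIfin n).ne]
      _ = ENNReal.ofReal (r n ^ m * (I n).toReal) := by
          rw [ENNReal.ofReal_mul (pow_nonneg (hr0 n).le m)]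
      _ ≤ ENNReal.ofReal ((2:ℝ)^(-(n:ℤ))) := ENNReal.ofReal_le_ofReal (hrsmall n)
  have hvint : ∫⁻ x in ball (0 : EuclideanSpace ℝ (Fin m)) 1, (‖v x‖₊ : ℝ≥0∞) ^ p < ⊤ := by
    have hSmeas : MeasurableSet (⋃ k, B k) := MeasurableSet.iUnion fun k => measurableSet_ball
    have hcompl : ∫⁻ x in (⋃ k, B k)ᶜ, (‖v x‖₊ : ℝ≥0∞) ^ p = 0 := by
      rw [← lintegral_zero (μ := volume.restrict (⋃ k, B k)ᶜ)]
      apply setLIntegral_congr_fun hSmeas.compl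
      intro x hx
      have : ¬ ∃ k, x ∈ B k := by simpa using hx
      simp only [hv0 x this]
      simp [ENNReal.zero_rpow_of_pos (lt_of_lt_of_le one_pos hp)]
    have hS : ∫⁻ x in ⋃ k, B k, (‖v x‖₊ : ℝ≥0∞) ^ p
        = ∑' n, ∫⁻ x in B n, (‖v x‖₊ : ℝ≥0∞) ^ p :=
      lintegral_iUnion (fun k => measurableSet_ball) (fun i j hij => hBdisj i j hij) _
    have htot : ∫⁻ x, (‖v x‖₊ : ℝ≥0∞) ^ p
        = ∑' n, ∫⁻ x in B n, (‖v x‖₊ : ℝ≥0∞) ^ p := by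
      rw [← lintegral_add_compl _ hSmeas, hcompl, add_zero, hS]
    calc ∫⁻ x in ball (0 : EuclideanSpace ℝ (Fin m)) 1, (‖v x‖₊ : ℝ≥0∞) ^ p
        ≤ ∫⁻ x, (‖v x‖₊ : ℝ≥0∞) ^ p := setLIntegral_le_lintegral _ _
      _ = ∑' n, ∫⁻ x in B n, (‖v x‖₊ : ℝ≥0∞) ^ p := htot
      _ ≤ ∑' n : ℕ, ENNReal.ofReal ((2:ℝ)^(-(n:ℤ))) := ENNReal.tsum_le_tsum hterm
      _ = ∑' n : ℕ, (ENNReal.ofReal 2⁻¹) ^ n := by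
          apply tsum_congr
          intro n
          rw [← ENNReal.ofReal_pow (by norm_num)]
          congr 1
          rw [inv_pow, ← zpow_natCast (2:ℝ) n, ← zpow_neg]
      _ = (1 - ENNReal.ofReal 2⁻¹)⁻¹ := ENNReal.tsum_geometric _
      _ < ⊤ := by
          apply ENNReal.inv_lt_top.2
          apply tsub_pos_of_lt
          rw [← ENNReal.ofReal_one]
          exact ENNReal.ofReal_lt_ofReal_iff_of_nonneg (by norm_num) |>.2 (by norm_num)
  have hvmem : MemLp v (ENNReal.ofReal p)
      (volume.restrict (ball (0 : EuclideanSpace ℝ (Fin m)) 1)) :=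
    lp_mem hp hvmeas.aestronglyMeasurable hvint
  -- energy of each ball
  have hGB : ∀ n, 1 ≤ G v (B n) := by
    intro n
    have h1 : B n = (fun y => cen hm n + r n • y) '' ball 0 1 := (img_ball _ (hr0 n)).symm
    rw [h1, hscale v (r n) (hr0 n) (cen hm n) _ isOpen_ball]
    have h2 : G (fun y => v (cen hm n + r n • y)) (ball 0 1) = G (u n) (ball 0 1) := by
      apply hlocal
      intro y hy
      have hyB : cen hm n + r n • y ∈ B n := by
        rw [hBdef]
        simp only [mem_ball, dist_eq_norm, add_sub_cancel_left, norm_smul,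
          Real.norm_eq_abs, abs_of_pos (hr0 n)]
        calc r n * ‖y‖ < r n * 1 := by
              apply mul_lt_mul_of_pos_left _ (hr0 n)
              simpa using hy
          _ = r n := mul_one _
      rw [hvB n _ hyB, hwcomp]
    rw [h2]
    exact hGn n
  -- superadditivity over finitely many balls
  have hUopen : ∀ n : ℕ, IsOpen (⋃ k ∈ Finset.range n, B k) :=
    fun n => isOpen_biUnion fun _ _ => isOpen_ball
  have hUn : ∀ n : ℕ, (n : ℝ≥0∞) ≤ G v (⋃ k ∈ Finset.range n, B k) := by
    intro n
    induction n with
    | zero => simp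
    | succ n ih =>
      have hclos : closure (⋃ k ∈ Finset.range n, B k) ∩ closure (B n) = ∅ := by
        have hsub1 : closure (⋃ k ∈ Finset.range n, B k)
            ⊆ ⋃ k ∈ Finset.range n, closedBall (cen hm k) ((2:ℝ)^(-(k:ℤ)-3)) := by
          apply closure_minimal
          · exact Set.iUnion₂_mono fun k _ => hBsub k
          · exact Set.Finite.isClosed_biUnion (Finset.range n).finite_toSet
              fun k _ => isClosed_closedBall
        have hsub2 : closure (B n) ⊆ closedBall (cen hm n) ((2:ℝ)^(-(n:ℤ)-3)) :=
          closure_minimal (hBsub n) isClosed_closedBall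
        rw [Set.eq_empty_iff_forall_notMem]
        rintro x ⟨hx1, hx2⟩
        obtain ⟨k, hk, hxk⟩ := Set.mem_iUnion₂.1 (hsub1 hx1)
        have hkn : k ≠ n := by
          intro hkn
          rw [hkn] at hk
          exact absurd hk (by simp)
        exact Set.disjoint_left.mp (cen_disj' hm hkn) hxk (hsub2 hx2)
      have hun : (⋃ k ∈ Finset.range (n+1), B k)
          = (⋃ k ∈ Finset.range n, B k) ∪ B n := by
        rw [Finset.range_add_one]
        simp only [Finset.mem_insert, Set.iUnion_iUnion_eq_or_left]
        rw [Set.union_comm]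
      rw [hun]
      push_cast
      calc (n : ℝ≥0∞) + 1 ≤ G v (⋃ k ∈ Finset.range n, B k) + G v (B n) :=
            add_le_add ih (hGB n)
        _ ≤ G v ((⋃ k ∈ Finset.range n, B k) ∪ B n) :=
            hsuper v _ _ (hUopen n) isOpen_ball hclos
  have hfinal : ∀ n : ℕ, (n : ℝ≥0∞) ≤ G v (ball 0 1) := by
    intro n
    refine le_trans (hUn n) (hmono v _ _ (hUopen n) isOpen_ball ?_)
    exact Set.iUnion₂_subset fun k _ => hBball k
  have hlt := hfin v hvmeas hvmem
  obtain ⟨n, hn⟩ := exists_nat_gt (G v (ball 0 1)).toReal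
  have h1 : (n : ℝ) ≤ (G v (ball 0 1)).toReal := by
    have := ENNReal.toReal_mono hlt.ne (hfinal n)
    simpa using this
  linarith
end
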